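/- Let t ≥ 1 and n be integers with 2t ≥ n ≥ t + 1, and let k₊ > k₋ > 0 be integers. Then there is no set T ⊆ ℤⁿ such that the error-ball B(n,t,k₊,k₋) tiles ℤⁿ by T. -/

import Mathlib

open Finset

/-- Hamming weight of an integer vector: the number of nonzero entries. -/
def wt {n : ℕ} (x : Fin n → ℤ) : ℕ := (Finset.univ.filter (fun i => x i ≠ 0)).card

/-- The `(n,t,k₊,k₋)`-error-ball in `ℤⁿ`. -/
def errBall (n t : ℕ) (kp km : ℤ) : Set (Fin n → ℤ) :=
  {x | (∀ i, -km ≤ x i ∧ x i ≤ kp) ∧ wt x ≤ t}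

/-- `Tiles B T` : every `z ∈ ℤⁿ` is uniquely `z = v + b` with `v ∈ T` and `b ∈ B`. -/
def Tiles {n : ℕ} (B T : Set (Fin n → ℤ)) : Prop :=
  ∀ z : Fin n → ℤ, ∃! p : (Fin n → ℤ) × (Fin n → ℤ),
    p.1 ∈ T ∧ p.2 ∈ B ∧ z = p.1 + p.2

namespace Stmt5Aux

variable {n t : ℕ} {kp km : ℤ}

lemma mem_errBall {x : Fin n → ℤ} :
    x ∈ errBall n t kp km ↔ (∀ i, -km ≤ x i ∧ x i ≤ kp) ∧ wt x ≤ t := Iff.rfl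

/-- Uniqueness in a tiling: equal sums force equal tiles. -/
lemma uniq {B T : Set (Fin n → ℤ)} (hT : Tiles B T) {v w b₁ b₂ : Fin n → ℤ}
    (hv : v ∈ T) (hw : w ∈ T) (h₁ : b₁ ∈ B) (h₂ : b₂ ∈ B) (h : v + b₁ = w + b₂) :
    v = w := by
  obtain ⟨p, -, hu⟩ := hT (v + b₁)
  have e1 := hu (v, b₁) ⟨hv, h₁, rfl⟩
  have e2 := hu (w, b₂) ⟨hw, h₂, h⟩
  have : (v, b₁) = ((w, b₂) : (Fin n → ℤ) × (Fin n → ℤ)) := by rw [e1, e2]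
  exact congrArg Prod.fst this

/-- Splitting lemma: a vector with entries in `[-kp, kp]`, at most `t` entries `> km`,
and at most `t` negative entries, is a difference of two ball elements. -/
lemma split (hn2 : n ≤ 2 * t) (hkm : 0 < km) (hkp : km < kp)
    (x : Fin n → ℤ) (hbox : ∀ i, -kp ≤ x i ∧ x i ≤ kp)
    (hfp : (univ.filter fun i => km < x i).card ≤ t)
    (hneg : (univ.filter fun i => x i < 0).card ≤ t) :
    ∃ b₁ ∈ errBall n t kp km, ∃ b₂ ∈ errBall n t kp km, ∀ i, x i = b₁ i - b₂ i := by
  classical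
  set P : Finset (Fin n) := univ.filter fun i => 0 < x i with hP
  set G : Finset (Fin n) := univ.filter fun i => 0 < x i ∧ x i ≤ km with hG
  have hGP : G ⊆ P := by
    intro i hi
    simp only [hG, hP, mem_filter, mem_univ, true_and] at hi ⊢
    exact hi.1
  -- card P ≤ card G + t
  have hPsub : P ⊆ G ∪ (univ.filter fun i => km < x i) := by
    intro i hi
    simp only [hG, hP, mem_filter, mem_univ, true_and, mem_union] at hi ⊢
    rcases le_or_gt (x i) km with h | h
    · exact Or.inl ⟨hi, h⟩
    · exact Or.inr h
  have hPG : P.card ≤ G.card + t := by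
    calc P.card ≤ (G ∪ (univ.filter fun i => km < x i)).card := card_le_card hPsub
    _ ≤ G.card + (univ.filter fun i => km < x i).card := card_union_le _ _
    _ ≤ G.card + t := by omega
  obtain ⟨E, hEG, hE⟩ := Finset.exists_subset_card_eq (s := G) (n := P.card - t) (by omega)
  have hEP : E ⊆ P := hEG.trans hGP
  -- the two ball elements
  refine ⟨fun i => if i ∈ P \ E then x i else 0, ?_,
          fun i => if i ∈ P \ E then 0 else - x i, ?_, ?_⟩
  · constructor
    · intro i
      by_cases hi : i ∈ P \ E
      · simp only [hi, if_pos]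
        have : 0 < x i := by
          have := (mem_sdiff.mp hi).1
          simp only [hP, mem_filter, mem_univ, true_and] at this
          exact this
        exact ⟨by omega, (hbox i).2⟩
      · simp only [hi, if_neg, not_false_iff]
        constructor <;> omega
    · have hsub : (univ.filter fun i =>
          (if i ∈ P \ E then x i else 0) ≠ 0) ⊆ P \ E := by
        intro i hi
        simp only [mem_filter, mem_univ, true_and] at hi
        by_contra h
        simp [h] at hi
      have h1 : (P \ E).card = P.card - E.card := card_sdiff_of_subset hEP
      calc wt _ ≤ (P \ E).card := card_le_card hsub
        _ ≤ t := by omega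
  · constructor
    · intro i
      by_cases hi : i ∈ P \ E
      · simp only [hi, if_pos]; constructor <;> omega
      · simp only [hi, if_neg, not_false_iff]
        rcases le_or_gt (x i) 0 with h | h
        · have := (hbox i).1; constructor <;> omega
        · -- 0 < x i and i ∉ P \ E, so i ∈ E ⊆ G, hence x i ≤ km
          have hiP : i ∈ P := by simp only [hP, mem_filter, mem_univ, true_and]; exact h
          have hiE : i ∈ E := by
            by_contra hE'
            exact hi (mem_sdiff.mpr ⟨hiP, hE'⟩)
          have hiG := hEG hiE
          simp only [hG, mem_filter, mem_univ, true_and] at hiG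
          constructor <;> omega
    · -- support of b₂ is inside E ∪ {x < 0}
      have hsub : (univ.filter fun i =>
          (if i ∈ P \ E then 0 else - x i) ≠ 0) ⊆ E ∪ (univ.filter fun i => x i < 0) := by
        intro i hi
        simp only [mem_filter, mem_univ, true_and] at hi
        by_cases hmem : i ∈ P \ E
        · simp [hmem] at hi
        · simp only [hmem, if_neg, not_false_iff] at hi
          have hx : x i ≠ 0 := by intro h; apply hi; omega
          rcases lt_or_gt_of_ne hx with h | h
          · exact mem_union_right _ (by simp only [mem_filter, mem_univ, true_and]; exact h)
          · have hiP : i ∈ P := by simp only [hP, mem_filter, mem_univ, true_and]; exact h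
            have hiE : i ∈ E := by
              by_contra hE'
              exact hmem (mem_sdiff.mpr ⟨hiP, hE'⟩)
            exact mem_union_left _ hiE
      have hdisj : Disjoint P (univ.filter fun i => x i < 0) := by
        rw [disjoint_left]
        intro i hi hi'
        simp only [hP, mem_filter, mem_univ, true_and] at hi
        simp only [mem_filter, mem_univ, true_and] at hi'
        omega
      have hPn : P.card + (univ.filter fun i => x i < 0).card ≤ n := by
        have := card_le_univ (P ∪ (univ.filter fun i => x i < 0))
        rw [card_union_of_disjoint hdisj] at this
        simpa using this
      calc wt _ ≤ (E ∪ (univ.filter fun i => x i < 0)).card := card_le_card hsub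
        _ ≤ E.card + (univ.filter fun i => x i < 0).card := card_union_le _ _
        _ ≤ t := by omega
  · intro i
    by_cases hi : i ∈ P \ E <;> simp [hi]

section Main

variable {T : Set (Fin n → ℤ)} {v₀ : Fin n → ℤ}

/-- Start: there is a tile whose offset from `v₀` satisfies the invariant `Q`. -/
lemma start (hn1 : t + 1 ≤ n) (hn2 : n ≤ 2 * t) (hkm : 0 < km) (hkp : km < kp)
    (hT : Tiles (errBall n t kp km) T) (hv₀ : v₀ ∈ T) :
    ∃ x : Fin n → ℤ, (∀ i, -kp ≤ x i ∧ x i ≤ kp + km) ∧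
      t + 1 ≤ (univ.filter fun i => km < x i).card := by
  classical
  obtain ⟨⟨τ, b⟩, ⟨hτT, hbB, hz⟩, -⟩ := hT (v₀ + fun _ => kp)
  dsimp only at hτT hbB hz
  obtain ⟨hbr, hbw⟩ := hbB
  set x : Fin n → ℤ := fun i => kp - b i with hxdef
  have hτx : ∀ i, τ i = v₀ i + x i := by
    intro i
    have := congrFun hz i
    simp only [Pi.add_apply] at this
    simp only [hxdef]
    omega
  have hbox : ∀ i, -kp ≤ x i ∧ x i ≤ kp + km := by
    intro i
    have h1 := (hbr i).1; have h2 := (hbr i).2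
    simp only [hxdef]
    constructor <;> omega
  have hxnn : ∀ i, 0 ≤ x i := by
    intro i; have := (hbr i).2; simp only [hxdef]; omega
  refine ⟨x, hbox, ?_⟩
  by_contra hA
  push_neg at hA
  have hfp : (univ.filter fun i => km < x i).card ≤ t := by omega
  -- construct a conflict
  set b₁ : Fin n → ℤ := fun i => if km < x i then min (x i) kp else 0 with hb₁
  set b₂ : Fin n → ℤ := fun i => b₁ i - x i with hb₂
  have hb₁B : b₁ ∈ errBall n t kp km := by
    constructor
    · intro i
      by_cases hi : km < x i
      · simp only [hb₁, hi, if_pos]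
        exact ⟨by have := le_min (le_of_lt hi) (le_of_lt hkp); omega,
               min_le_right _ _⟩
      · simp only [hb₁, hi, if_neg, not_false_iff]
        constructor <;> omega
    · have hsub : (univ.filter fun i => b₁ i ≠ 0) ⊆ (univ.filter fun i => km < x i) := by
        intro i hi
        simp only [mem_filter, mem_univ, true_and] at hi ⊢
        by_contra h
        simp [hb₁, h] at hi
      exact le_trans (card_le_card hsub) hfp
  have hb₂B : b₂ ∈ errBall n t kp km := by
    constructor
    · intro i
      by_cases hi : km < x i
      · simp only [hb₂, hb₁, hi, if_pos]
        have h1 : min (x i) kp ≤ x i := min_le_left _ _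
        have h2 : x i ≤ kp + km := (hbox i).2
        have h3 : x i - km ≤ min (x i) kp := le_min (by omega) (by omega)
        constructor <;> omega
      · simp only [hb₂, hb₁, hi, if_neg, not_false_iff]
        have h1 := hxnn i
        have h2 : x i ≤ km := by omega
        constructor <;> omega
    · have hsub : (univ.filter fun i => b₂ i ≠ 0) ⊆ (univ.filter fun i => b i ≠ 0) := by
        intro i hi
        simp only [mem_filter, mem_univ, true_and] at hi ⊢
        by_cases hik : km < x i
        · simp only [hb₂, hb₁, hik, if_pos] at hi
          -- min (x i) kp ≠ x i, so x i > kp, so b i = kp - x i < 0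
          have hxi : kp < x i := by
            by_contra h
            push_neg at h
            rw [min_eq_left h] at hi
            omega
          have : b i = kp - x i := by simp only [hxdef]; ring
          omega
        · simp only [hb₂, hb₁, hik, if_neg, not_false_iff] at hi
          have h0 := hxnn i
          have hle : x i ≤ km := by omega
          have : b i = kp - x i := by simp only [hxdef]; ring
          omega
      exact le_trans (card_le_card hsub) hbw
  have hconf : v₀ + b₁ = τ + b₂ := by
    funext i
    simp only [Pi.add_apply, hτx i, hb₂]
    ring
  have hvτ : v₀ = τ := uniq hT hv₀ hτT hb₁B hb₂B hconf
  have hx0 : ∀ i, x i = 0 := by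
    intro i
    have := hτx i
    rw [← hvτ] at this
    omega
  -- then b i = kp for all i, so wt b = n > t
  have hwtb : (univ.filter fun i => b i ≠ 0) = univ := by
    apply eq_univ_of_forall
    intro i
    simp only [mem_filter, mem_univ, true_and]
    have := hx0 i
    simp only [hxdef] at this
    omega
  have : wt b = n := by rw [wt, hwtb, card_univ, Fintype.card_fin]
  omega

/-- Descent step: from a tile offset satisfying `Q`, produce another with smaller potential. -/
lemma step (hn1 : t + 1 ≤ n) (hn2 : n ≤ 2 * t) (hkm : 0 < km) (hkp : km < kp)
    (hT : Tiles (errBall n t kp km) T) (hv₀ : v₀ ∈ T)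
    (x : Fin n → ℤ) (hbox : ∀ i, -kp ≤ x i ∧ x i ≤ kp + km)
    (hA : t + 1 ≤ (univ.filter fun i => km < x i).card) :
    ∃ x' : Fin n → ℤ, (∀ i, -kp ≤ x' i ∧ x' i ≤ kp + km) ∧
      t + 1 ≤ (univ.filter fun i => km < x' i).card ∧
      (∑ i, max (x' i) 0) + 1 ≤ ∑ i, max (x i) 0 := by
  classical
  set y : Fin n → ℤ := fun i => if km < x i then min (x i) kp - km else 0 with hy
  obtain ⟨⟨τ, b⟩, ⟨hτT, hbB, hz⟩, -⟩ := hT (v₀ + y)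
  dsimp only at hτT hbB hz
  obtain ⟨hbr, hbw⟩ := hbB
  set x' : Fin n → ℤ := fun i => y i - b i with hx'
  have hτx : ∀ i, τ i = v₀ i + x' i := by
    intro i
    have := congrFun hz i
    simp only [Pi.add_apply] at this
    simp only [hx']
    omega
  -- coordinate facts
  have hmin : ∀ i, km < x i → km + 1 ≤ min (x i) kp := fun i hi =>
    le_min (by omega) (by omega)
  have hbox' : ∀ i, -kp ≤ x' i ∧ x' i ≤ kp := by
    intro i
    have h1 := (hbr i).1; have h2 := (hbr i).2
    by_cases hi : km < x i
    · have h3 := hmin i hi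
      have h4 : min (x i) kp ≤ kp := min_le_right _ _
      simp only [hx', hy, hi, if_pos]
      constructor <;> omega
    · simp only [hx', hy, hi, if_neg, not_false_iff]
      constructor <;> omega
  -- negative coordinates of x' are in the support of b
  have hnegsub : (univ.filter fun i => x' i < 0) ⊆ (univ.filter fun i => b i ≠ 0) := by
    intro i hi
    simp only [mem_filter, mem_univ, true_and] at hi ⊢
    by_cases hik : km < x i
    · have h3 := hmin i hik
      simp only [hx', hy, hik, if_pos] at hi
      omega
    · simp only [hx', hy, hik, if_neg, not_false_iff] at hi
      omega
  have hneg : (univ.filter fun i => x' i < 0).card ≤ t :=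
    le_trans (card_le_card hnegsub) hbw
  -- potential decrease
  set c1 := (univ.filter fun i => km < x i ∧ 0 ≤ b i).card with hc1
  set c2 := (univ.filter fun i => ¬ km < x i ∧ b i < 0).card with hc2
  have hkey : ∀ i ∈ univ,
      max (x' i) 0 + (if km < x i ∧ 0 ≤ b i then km else 0) ≤
      max (x i) 0 + (if ¬ km < x i ∧ b i < 0 then km else 0) := by
    intro i _
    have h1 := (hbr i).1; have h2 := (hbr i).2
    by_cases hik : km < x i
    · have h3 := hmin i hik
      have h4 : min (x i) kp ≤ x i := min_le_left _ _
      have hxpos : max (x i) 0 = x i := max_eq_left (by omega)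
      by_cases hbs : 0 ≤ b i
      · simp only [hik, hbs, and_self, if_pos, true_and, not_lt,
          if_neg (by omega : ¬ (¬ km < x i ∧ b i < 0))]
        have hx'le : x' i ≤ min (x i) kp - km := by
          simp only [hx', hy, hik, if_pos]; omega
        have : max (x' i) 0 ≤ min (x i) kp - km := max_le hx'le (by omega)
        omega
      · simp only [if_neg (by omega : ¬ (km < x i ∧ 0 ≤ b i)),
          if_neg (by omega : ¬ (¬ km < x i ∧ b i < 0))]
        have hx'le : x' i ≤ min (x i) kp := by
          simp only [hx', hy, hik, if_pos]; omega
        have : max (x' i) 0 ≤ x i := max_le (by omega) (by omega)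
        omega
    · have hx'eq : x' i = - b i := by simp only [hx', hy, hik, if_neg, not_false_iff]; ring
      by_cases hbs : b i < 0
      · simp only [if_neg (by omega : ¬ (km < x i ∧ 0 ≤ b i)),
          if_pos (⟨hik, hbs⟩ : ¬ km < x i ∧ b i < 0)]
        have hm1 : max (x' i) 0 ≤ km := max_le (by omega) (by omega)
        have hm2 : 0 ≤ max (x i) 0 := le_max_right _ _
        omega
      · simp only [if_neg (by omega : ¬ (km < x i ∧ 0 ≤ b i)),
          if_neg (by omega : ¬ (¬ km < x i ∧ b i < 0))]
        have hm1 : max (x' i) 0 ≤ 0 := max_le (by omega) le_rfl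
        have hm2 : 0 ≤ max (x i) 0 := le_max_right _ _
        omega
  have hsum := Finset.sum_le_sum hkey
  rw [Finset.sum_add_distrib, Finset.sum_add_distrib] at hsum
  have hind1 : (∑ i, (if km < x i ∧ 0 ≤ b i then km else 0)) = (c1 : ℤ) * km := by
    rw [Finset.sum_ite, Finset.sum_const, Finset.sum_const_zero, add_zero, nsmul_eq_mul]
  have hind2 : (∑ i, (if ¬ km < x i ∧ b i < 0 then km else 0)) = (c2 : ℤ) * km := by
    rw [Finset.sum_ite, Finset.sum_const, Finset.sum_const_zero, add_zero, nsmul_eq_mul]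
  rw [hind1, hind2] at hsum
  -- card arithmetic : c2 + 1 ≤ c1
  have hsplit1 : (univ.filter fun i => km < x i) ⊆
      (univ.filter fun i => km < x i ∧ 0 ≤ b i) ∪ (univ.filter fun i => km < x i ∧ b i < 0) := by
    intro i hi
    simp only [mem_filter, mem_univ, true_and, mem_union] at hi ⊢
    rcases le_or_gt 0 (b i) with h | h
    · exact Or.inl ⟨hi, h⟩
    · exact Or.inr ⟨hi, h⟩
  have hp1 : t + 1 ≤ c1 + (univ.filter fun i => km < x i ∧ b i < 0).card := by
    calc t + 1 ≤ (univ.filter fun i => km < x i).card := hA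
      _ ≤ _ := le_trans (card_le_card hsplit1) (card_union_le _ _)
  have hdisj2 : Disjoint (univ.filter fun i => km < x i ∧ b i < 0)
      (univ.filter fun i => ¬ km < x i ∧ b i < 0) := by
    rw [disjoint_left]
    intro i hi hi'
    simp only [mem_filter, mem_univ, true_and] at hi hi'
    exact hi'.1 hi.1
  have hsub2 : (univ.filter fun i => km < x i ∧ b i < 0) ∪
      (univ.filter fun i => ¬ km < x i ∧ b i < 0) ⊆ (univ.filter fun i => b i ≠ 0) := by
    intro i hi
    simp only [mem_union, mem_filter, mem_univ, true_and] at hi ⊢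
    rcases hi with h | h <;> omega
  have hp2 : (univ.filter fun i => km < x i ∧ b i < 0).card + c2 ≤ t := by
    have := card_le_card hsub2
    rw [card_union_of_disjoint hdisj2] at this
    exact le_trans this hbw
  have hcc : c2 + 1 ≤ c1 := by omega
  have hmul : (c2 : ℤ) * km + km ≤ (c1 : ℤ) * km := by
    have : ((c2 : ℤ) + 1) * km ≤ (c1 : ℤ) * km := by
      apply mul_le_mul_of_nonneg_right _ (le_of_lt hkm)
      exact_mod_cast hcc
    linarith
  have hphi : (∑ i, max (x' i) 0) + 1 ≤ ∑ i, max (x i) 0 := by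
    linarith
  -- main dichotomy
  by_cases hA' : t + 1 ≤ (univ.filter fun i => km < x' i).card
  · exact ⟨x', fun i => ⟨(hbox' i).1, by have := (hbox' i).2; omega⟩, hA', hphi⟩
  exfalso
  push_neg at hA'
  obtain ⟨b₁, hb₁B, b₂, hb₂B, hsp⟩ := split hn2 hkm hkp x' hbox' (by omega) hneg
  have hconf : v₀ + b₁ = τ + b₂ := by
    funext i
    simp only [Pi.add_apply, hτx i]
    have := hsp i
    omega
  have hvτ : v₀ = τ := uniq hT hv₀ hτT hb₁B hb₂B hconf
  have hx'0 : ∀ i, x' i = 0 := by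
    intro i
    have := hτx i
    rw [← hvτ] at this
    omega
  -- then y = b, but wt y ≥ t + 1 > t
  have hsubA : (univ.filter fun i => km < x i) ⊆ (univ.filter fun i => b i ≠ 0) := by
    intro i hi
    simp only [mem_filter, mem_univ, true_and] at hi ⊢
    have h0 := hx'0 i
    have h3 := hmin i hi
    simp only [hx', hy, hi, if_pos] at h0
    omega
  have := le_trans hA (le_trans (card_le_card hsubA) hbw)
  omega

end Main

end Stmt5Aux

theorem stmt_5 (n t : ℕ) (kp km : ℤ) (ht : 1 ≤ t) (hn1 : t + 1 ≤ n) (hn2 : n ≤ 2 * t)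
    (hkm : 0 < km) (hkp : km < kp) :
    ¬ ∃ T : Set (Fin n → ℤ), Tiles (errBall n t kp km) T := by
  rintro ⟨T, hT⟩
  obtain ⟨⟨v₀, b₀⟩, ⟨hv₀, -, -⟩, -⟩ := hT 0
  dsimp only at hv₀
  obtain ⟨x₀, hbox₀, hA₀⟩ := Stmt5Aux.start hn1 hn2 hkm hkp hT hv₀
  -- induction on the potential
  have main : ∀ N : ℕ, ∀ x : Fin n → ℤ, (∀ i, -kp ≤ x i ∧ x i ≤ kp + km) →
      t + 1 ≤ (univ.filter fun i => km < x i).card → (∑ i, max (x i) 0) ≤ N → False := by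
    intro N
    induction N with
    | zero =>
      intro x hbox hA hle
      obtain ⟨x', hbox', hA', hlt⟩ := Stmt5Aux.step hn1 hn2 hkm hkp hT hv₀ x hbox hA
      have h0 : (0 : ℤ) ≤ ∑ i, max (x' i) 0 :=
        Finset.sum_nonneg fun i _ => le_max_right _ _
      simp only [Nat.cast_zero] at hle
      omega
    | succ N ih =>
      intro x hbox hA hle
      obtain ⟨x', hbox', hA', hlt⟩ := Stmt5Aux.step hn1 hn2 hkm hkp hT hv₀ x hbox hA
      apply ih x' hbox' hA'
      push_cast at hle ⊢
      omega
  exact main (∑ i, max (x₀ i) 0).toNat x₀ hbox₀ hA₀ (Int.self_le_toNat _)
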